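/- arXiv:1902.11186 — 7 statements merged into one kernel-verified Lean document; each statement's English description precedes it below -/
import Mathlib

section
/- There exists a row vector q : (Fin p ⊕ Fin m_u) → K such that q ᵥ* G = 0 (decoupling of control and disturbance inputs) and, for every j : Fin m_f, q ⬝ᵥ (Sum.elim (fun i => G_f i j) 0) ≠ 0 (every fault influences the residual), if and only if for every j : Fin m_f the rank of the matrix obtained by appending the column (fun i => G_f i j) to G_d is strictly greater than the rank of G_d. (Theorem 1: the exact fault detection problem is solvable by a rational filter if and only if the system is completely fault detectable.) -/
open Matrix

section Aux

variable {K : Type*} [Field K] {p m : ℕ}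

/-- The linear functional `v ↦ v ⬝ᵥ g`. -/
noncomputable def dotL (g : Fin p → K) : (Fin p → K) →ₗ[K] K where
  toFun v := v ⬝ᵥ g
  map_add' u v := add_dotProduct u v g
  map_smul' c v := smul_dotProduct c v g

@[simp] lemma dotL_apply (g v : Fin p → K) : dotL g v = v ⬝ᵥ g := rfl

lemma sep_conv {G_d : Matrix (Fin p) (Fin m) K} {g q : Fin p → K}
    (hq : q ᵥ* G_d = 0) (hg : g ∈ LinearMap.range G_d.mulVecLin) :
    q ⬝ᵥ g = 0 := by
  obtain ⟨y, rfl⟩ := hg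
  rw [mulVecLin_apply, dotProduct_mulVec, hq, zero_dotProduct]

lemma separation {G_d : Matrix (Fin p) (Fin m) K} {g : Fin p → K}
    (hg : g ∉ LinearMap.range G_d.mulVecLin) :
    ∃ q : Fin p → K, q ᵥ* G_d = 0 ∧ q ⬝ᵥ g ≠ 0 := by
  obtain ⟨f, hfg, hmap⟩ :=
    Submodule.exists_dual_map_eq_bot_of_notMem hg inferInstance
  set q : Fin p → K := fun i => f (Pi.single i 1) with hqdef
  have key : ∀ v : Fin p → K, f v = q ⬝ᵥ v := by
    intro v
    conv_lhs => rw [← Finset.univ_sum_single v]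
    rw [map_sum]
    simp only [dotProduct]
    refine Finset.sum_congr rfl fun i _ => ?_
    have hsingle : Pi.single i (v i) = (v i) • (Pi.single i (1 : K) : Fin p → K) := by
      rw [← Pi.single_smul, smul_eq_mul, mul_one]
    rw [hsingle, f.map_smul, smul_eq_mul, mul_comm]
  have hzero : ∀ x ∈ LinearMap.range G_d.mulVecLin, f x = 0 := by
    intro x hx
    have : f x ∈ Submodule.map f (LinearMap.range G_d.mulVecLin) :=
      Submodule.mem_map_of_mem hx
    rw [hmap] at this
    exact this
  refine ⟨q, ?_, ?_⟩
  · funext k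
    have hcol : (fun i => G_d i k) ∈ LinearMap.range G_d.mulVecLin := by
      refine ⟨Pi.single k 1, ?_⟩
      rw [mulVecLin_apply, mulVec_single]
      funext i; simp
    have : q ⬝ᵥ (fun i => G_d i k) = 0 := by
      rw [← key]; exact hzero _ hcol
    simpa [vecMul, dotProduct] using this
  · rw [← key]; exact hfg

lemma rank_iff (G_d : Matrix (Fin p) (Fin m) K) (g : Fin p → K) :
    (Matrix.fromCols G_d (Matrix.replicateCol (Fin 1) g)).rank > G_d.rank ↔
      g ∉ LinearMap.range G_d.mulVecLin := by
  have hcolmul : ∀ y : Fin 1 → K, (Matrix.replicateCol (Fin 1) g) *ᵥ y = y 0 • g := by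
    intro y
    funext i
    simp [mulVec, dotProduct, Matrix.replicateCol, Fin.sum_univ_one, mul_comm]
  have hrange : LinearMap.range (Matrix.fromCols G_d (Matrix.replicateCol (Fin 1) g)).mulVecLin =
      LinearMap.range G_d.mulVecLin ⊔ Submodule.span K {g} := by
    apply le_antisymm
    · rintro x ⟨y, rfl⟩
      have hy : y = Sum.elim (y ∘ Sum.inl) (y ∘ Sum.inr) := by
        funext z; cases z <;> rfl
      rw [mulVecLin_apply, hy, fromCols_mulVec_sumElim]
      refine Submodule.add_mem _ (Submodule.mem_sup_left ⟨_, rfl⟩)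
        (Submodule.mem_sup_right ?_)
      rw [hcolmul]
      exact Submodule.smul_mem _ _ (Submodule.mem_span_singleton_self g)
    · refine sup_le ?_ ?_
      · rintro x ⟨y, rfl⟩
        refine ⟨Sum.elim y 0, ?_⟩
        rw [mulVecLin_apply, fromCols_mulVec_sumElim, mulVec_zero, add_zero,
          mulVecLin_apply]
      · rw [Submodule.span_singleton_le_iff_mem]
        refine ⟨Sum.elim 0 1, ?_⟩
        rw [mulVecLin_apply, fromCols_mulVec_sumElim, mulVec_zero, zero_add, hcolmul]
        simp
  constructor
  · intro hlt hmem
    rw [Matrix.rank, Matrix.rank, hrange,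
      sup_eq_left.mpr ((Submodule.span_singleton_le_iff_mem _ _).mpr hmem)] at hlt
    exact lt_irrefl _ hlt
  · intro hmem
    rw [Matrix.rank, Matrix.rank, hrange]
    apply Submodule.finrank_lt_finrank_of_lt
    refine lt_of_le_of_ne le_sup_left ?_
    intro heq
    apply hmem
    rw [heq]
    exact Submodule.mem_sup_right (Submodule.mem_span_singleton_self g)

end Aux

/-- Theorem 1: the exact fault detection problem is solvable by a rational filter
if and only if the system is completely fault detectable. -/
theorem efdp_solvable_iff_completely_fault_detectable
    (p m_u m_d m_f : ℕ)
    (G_u : Matrix (Fin p) (Fin m_u) (RatFunc ℝ))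
    (G_d : Matrix (Fin p) (Fin m_d) (RatFunc ℝ))
    (G_f : Matrix (Fin p) (Fin m_f) (RatFunc ℝ)) :
    (∃ q : (Fin p ⊕ Fin m_u) → RatFunc ℝ,
        q ᵥ* (Matrix.fromBlocks G_u G_d 1 0) = 0 ∧
        ∀ j : Fin m_f, q ⬝ᵥ (Sum.elim (fun i => G_f i j) 0) ≠ 0) ↔
    (∀ j : Fin m_f,
        (Matrix.fromCols G_d (Matrix.replicateCol (Fin 1) (fun i => G_f i j))).rank
          > G_d.rank) := by
  haveI : Infinite (RatFunc ℝ) :=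
    Infinite.of_injective (algebraMap (Polynomial ℝ) (RatFunc ℝ))
      (IsFractionRing.injective _ _)
  constructor
  · rintro ⟨q, hq0, hqf⟩ j
    rw [vecMul_fromBlocks] at hq0
    have h2 : (q ∘ Sum.inl) ᵥ* G_d = 0 := by
      funext k
      have := congrFun hq0 (Sum.inr k)
      simpa [vecMul_zero] using this
    rw [rank_iff]
    intro hg
    apply hqf j
    have hq' : q = Sum.elim (q ∘ Sum.inl) (q ∘ Sum.inr) := by
      funext z; cases z <;> rfl
    rw [hq', sumElim_dotProduct_sumElim, dotProduct_zero, add_zero]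
    exact sep_conv h2 hg
  · intro h
    set W := LinearMap.ker G_d.vecMulLinear with hWdef
    have hW : ∀ j : Fin m_f, ∃ qj : W, (qj : Fin p → RatFunc ℝ) ⬝ᵥ (fun i => G_f i j) ≠ 0 := by
      intro j
      obtain ⟨q, hq0, hqg⟩ := separation ((rank_iff _ _).mp (h j))
      exact ⟨⟨q, by simp [hWdef, LinearMap.mem_ker, hq0]⟩, hqg⟩
    set S : Fin m_f → Submodule (RatFunc ℝ) W :=
      fun j => LinearMap.ker ((dotL (fun i => G_f i j)).comp W.subtype) with hSdef
    have hne : ∀ j, S j ≠ ⊤ := by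
      intro j hj
      obtain ⟨qj, hqj⟩ := hW j
      have hmem : qj ∈ S j := by rw [hj]; exact Submodule.mem_top
      exact hqj (by simpa [hSdef] using hmem)
    have hunion : (⋃ j, (S j : Set W)) ≠ Set.univ := by
      intro hc
      obtain ⟨j, hj⟩ := Subspace.exists_eq_top_of_iUnion_eq_univ hc
      exact hne j hj
    obtain ⟨w, hw⟩ := Set.ne_univ_iff_exists_notMem _ |>.mp hunion
    rw [Set.mem_iUnion] at hw
    push_neg at hw
    have hwd : (w : Fin p → RatFunc ℝ) ᵥ* G_d = 0 := by
      have hmem := LinearMap.mem_ker.mp w.2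
      rwa [vecMulLinear_apply] at hmem
    refine ⟨Sum.elim (w : Fin p → RatFunc ℝ) (-((w : Fin p → RatFunc ℝ) ᵥ* G_u)), ?_, ?_⟩
    · rw [vecMul_fromBlocks]
      funext z
      cases z <;>
        simp [hwd, vecMul_zero, vecMul_one]
    · intro j
      rw [sumElim_dotProduct_sumElim, dotProduct_zero, add_zero]
      have hws : w ∉ S j := hw j
      intro hc
      apply hws
      simp [hSdef, hc]
end

section
/- Let K be an infinite field, G_d : Matrix (Fin p) (Fin m_d) K, and v : Fin m → (Fin p → K) a family of column vectors such that for every j : Fin m the rank of the matrix obtained by appending the column v j to G_d is strictly greater than the rank of G_d. Then there exists a single row vector q : Fin p → K with q ᵥ* G_d = 0 and q ⬝ᵥ v j ≠ 0 for every j : Fin m. -/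
open Matrix

private lemma rank_eq_of_ker_transpose_eq {K : Type*} [Field K] {p : ℕ} {n₁ n₂ : Type*}
    [Fintype n₁] [Fintype n₂]
    (A : Matrix (Fin p) n₁ K) (B : Matrix (Fin p) n₂ K)
    (hker : LinearMap.ker Aᵀ.mulVecLin = LinearMap.ker Bᵀ.mulVecLin) :
    A.rank = B.rank := by
  have hA : Aᵀ.rank + Module.finrank K (LinearMap.ker Aᵀ.mulVecLin) = p := by
    have := LinearMap.finrank_range_add_finrank_ker Aᵀ.mulVecLin
    simpa [Matrix.rank, Module.finrank_pi] using this
  have hB : Bᵀ.rank + Module.finrank K (LinearMap.ker Bᵀ.mulVecLin) = p := by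
    have := LinearMap.finrank_range_add_finrank_ker Bᵀ.mulVecLin
    simpa [Matrix.rank, Module.finrank_pi] using this
  rw [← Matrix.rank_transpose A, ← Matrix.rank_transpose B]
  rw [hker] at hA
  omega

/-- Over an infinite field, if every column `v j` lies outside the column span of `G_d`
(expressed via a strict rank increase), then a single row vector in the left nullspace of
`G_d` can be chosen that is sensitive to all the vectors `v j` simultaneously. -/
theorem exists_left_annihilator_sensitive_to_all
    (K : Type*) [Field K] [Infinite K] (p m_d m : ℕ)
    (G_d : Matrix (Fin p) (Fin m_d) K) (v : Fin m → (Fin p → K))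
    (h : ∀ j : Fin m,
      (Matrix.fromCols G_d (Matrix.replicateCol (Fin 1) (v j))).rank > G_d.rank) :
    ∃ q : Fin p → K, q ᵥ* G_d = 0 ∧ ∀ j : Fin m, q ⬝ᵥ v j ≠ 0 := by
  set W : Submodule K (Fin p → K) := LinearMap.ker G_dᵀ.mulVecLin with hW
  have hWmem : ∀ q : Fin p → K, q ∈ W ↔ q ᵥ* G_d = 0 := by
    intro q
    simp [hW, LinearMap.mem_ker, Matrix.mulVecLin_apply, Matrix.mulVec_transpose]
  -- For each j, not all of W is annihilated by dot product with v j
  have key : ∀ j : Fin m, ∃ q ∈ W, q ⬝ᵥ v j ≠ 0 := by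
    intro j
    by_contra hcon
    push_neg at hcon
    have hkereq : LinearMap.ker
        (Matrix.fromCols G_d (Matrix.replicateCol (Fin 1) (v j)))ᵀ.mulVecLin = W := by
      ext q
      simp only [LinearMap.mem_ker, Matrix.mulVecLin_apply, Matrix.mulVec_transpose,
        Matrix.vecMul_fromCols]
      constructor
      · intro hq
        rw [hWmem]
        have h1 : q ᵥ* G_d = 0 := by
          funext i
          have := congrFun hq (Sum.inl i)
          simpa using this
        exact h1
      · intro hq
        have h1 : q ᵥ* G_d = 0 := (hWmem q).mp hq
        have h2 : q ⬝ᵥ v j = 0 := hcon q hq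
        funext i
        rcases i with i | i
        · simpa using congrFun h1 i
        · simp [Matrix.vecMul, Matrix.replicateCol, dotProduct] at h2 ⊢
          simpa [dotProduct, mul_comm] using h2
    have := rank_eq_of_ker_transpose_eq
      (Matrix.fromCols G_d (Matrix.replicateCol (Fin 1) (v j))) G_d (by rw [hkereq])
    exact absurd this (ne_of_gt (h j))
  -- m = 0 handled trivially within the covering argument
  -- Linear functional on W given by dot product with v j
  let ψ : Fin m → (W →ₗ[K] K) := fun j =>
    { toFun := fun q => (q : Fin p → K) ⬝ᵥ v j
      map_add' := fun a b => by simp [add_dotProduct]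
      map_smul' := fun c a => by simp [smul_dotProduct] }
  have hne : ∀ j, LinearMap.ker (ψ j) ≠ ⊤ := by
    intro j hj
    obtain ⟨q, hqW, hq⟩ := key j
    have : (⟨q, hqW⟩ : W) ∈ LinearMap.ker (ψ j) := by rw [hj]; trivial
    exact hq this
  have hcover : ¬ (⋃ j, ((LinearMap.ker (ψ j) : Submodule K W) : Set W) = Set.univ) := by
    intro hc
    obtain ⟨j, hj⟩ := Subspace.exists_eq_top_of_iUnion_eq_univ hc
    exact hne j hj
  rw [Set.eq_univ_iff_forall] at hcover
  push_neg at hcover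
  obtain ⟨⟨q, hqW⟩, hq⟩ := hcover
  refine ⟨q, (hWmem q).mp hqW, fun j hj => ?_⟩
  exact hq (Set.mem_iUnion.mpr ⟨j, by simpa [ψ] using hj⟩)
end

section
/- Let S : Fin n_b → Fin m_f → Bool be a structure matrix. For each i : Fin n_b let Ĝ^{(i)} denote the matrix G_d augmented with all columns G_{f_k} of G_f for which S i k = false. Then the following are equivalent: (1) there exists a family of row vectors q : Fin n_b → ((Fin p ⊕ Fin m_u) → K) such that for every i, (q i) ᵥ* G = 0, (q i) ⬝ᵥ (Sum.elim (fun r => G_f r j) 0) = 0 for every j with S i j = false, and (q i) ⬝ᵥ (Sum.elim (fun r => G_f r j) 0) ≠ 0 for every j with S i j = true; (2) for every i : Fin n_b and every j : Fin m_f with S i j = true, the rank of the matrix obtained by appending the column (fun r => G_f r j) to Ĝ^{(i)} is strictly greater than the rank of Ĝ^{(i)}. (Theorem 3: the exact fault detection and isolation problem with structure matrix S is solvable by rational filters if and only if the system is S fault isolable.) -/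
open Matrix Module Submodule
set_option linter.unusedSectionVars false

variable {F : Type*} [Field F] {n m : Type*} [Fintype n] [Fintype m] [DecidableEq n]

/-- dot with `c` on the right as a linear map in the left argument. -/
noncomputable def dotRightLin (v : n → F) : (n → F) →ₗ[F] F where
  toFun x := v ⬝ᵥ x
  map_add' x y := dotProduct_add v x y
  map_smul' a x := dotProduct_smul a v x

lemma aux_dot_zero_of_mem_span {A : Matrix n m F} {v c : n → F}
    (hv : v ᵥ* A = 0) (hc : c ∈ span F (Set.range Aᵀ)) : v ⬝ᵥ c = 0 := by
  have hker : span F (Set.range Aᵀ) ≤ LinearMap.ker (dotRightLin v) := by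
    rw [span_le]
    rintro _ ⟨j, rfl⟩
    have := congrFun hv j
    exact (by simpa [dotRightLin, vecMul, transpose] using this : v ⬝ᵥ (fun i => A i j) = 0)
  exact hker hc

lemma aux_exists_of_not_mem_span {A : Matrix n m F} {c : n → F}
    (hc : c ∉ span F (Set.range Aᵀ)) :
    ∃ v : n → F, v ᵥ* A = 0 ∧ v ⬝ᵥ c ≠ 0 := by
  obtain ⟨f, hfc, hmap⟩ :=
    (span F (Set.range Aᵀ)).exists_dual_map_eq_bot_of_notMem hc inferInstance
  set v : n → F := fun i => f fun j => if i = j then 1 else 0 with hv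
  have key : ∀ x : n → F, v ⬝ᵥ x = f x := by
    intro x
    rw [LinearMap.pi_apply_eq_sum_univ f x]
    simp [dotProduct, hv, mul_comm, smul_eq_mul]
  have hcol : ∀ j, f (Aᵀ j) = 0 := by
    intro j
    have : f (Aᵀ j) ∈ (span F (Set.range Aᵀ)).map f :=
      Submodule.mem_map_of_mem (subset_span ⟨j, rfl⟩)
    rw [hmap] at this
    simpa using this
  refine ⟨v, ?_, by rw [key]; exact hfc⟩
  funext j
  have := hcol j
  simpa [vecMul, dotProduct, transpose, key (fun i => A i j)] using
    (key (fun i => A i j)).trans this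

lemma aux_rank_iff {A : Matrix n m F} {c : n → F} :
    (fromCols A (replicateCol (Fin 1) c)).rank > A.rank ↔ c ∉ span F (Set.range Aᵀ) := by
  classical
  have hspan : span F (Set.range (fromCols A (replicateCol (Fin 1) c))ᵀ)
      = span F (Set.range Aᵀ) ⊔ span F {c} := by
    rw [transpose_fromCols]
    have : Set.range (fromRows Aᵀ (replicateCol (Fin 1) c)ᵀ) = Set.range Aᵀ ∪ {c} := by
      ext x
      constructor
      · rintro ⟨(j | j), rfl⟩
        · exact Or.inl ⟨j, rfl⟩
        · exact Or.inr rfl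
      · rintro (⟨j, rfl⟩ | rfl)
        · exact ⟨Sum.inl j, rfl⟩
        · exact ⟨Sum.inr 0, rfl⟩
    rw [this, span_union]
  rw [rank_eq_finrank_span_cols, rank_eq_finrank_span_cols]
  change finrank F (span F (Set.range (fromCols A (replicateCol (Fin 1) c))ᵀ)) > finrank F (span F (Set.range Aᵀ)) ↔ _
  rw [hspan]
  constructor
  · intro h hc
    have : span F ({c} : Set (n → F)) ≤ span F (Set.range Aᵀ) := by
      rw [span_le]; simpa using hc
    rw [sup_eq_left.mpr this] at h
    exact lt_irrefl _ h
  · intro hc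
    apply Submodule.finrank_lt_finrank_of_lt
    refine lt_of_le_of_ne le_sup_left fun h => hc ?_
    rw [h]
    exact le_sup_right (α := Submodule F (n → F)) (mem_span_singleton_self c)

noncomputable def dotLeftLin (c : n → F) : (n → F) →ₗ[F] F where
  toFun x := x ⬝ᵥ c
  map_add' x y := add_dotProduct x y c
  map_smul' a x := smul_dotProduct a x c

lemma aux_avoid {ι : Type*} [Finite ι] [Infinite F] (A : Matrix n m F) (c : ι → n → F)
    (h : ∀ j, ∃ v : n → F, v ᵥ* A = 0 ∧ v ⬝ᵥ c j ≠ 0) :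
    ∃ v : n → F, v ᵥ* A = 0 ∧ ∀ j, v ⬝ᵥ c j ≠ 0 := by
  classical
  set W : Submodule F (n → F) := LinearMap.ker A.vecMulLinear with hW
  set P : ι → Subspace F ↥W := fun j => LinearMap.ker ((dotLeftLin (c j)).comp W.subtype) with hP
  have hne : (⋃ j, ((P j : Set ↥W))) ≠ Set.univ := by
    intro hU
    obtain ⟨j, hj⟩ := Subspace.exists_eq_top_of_iUnion_eq_univ hU
    obtain ⟨v, hv1, hv2⟩ := h j
    have hvW : v ∈ W := by
      rw [hW, LinearMap.mem_ker, Matrix.vecMulLinear_apply, hv1]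
    have : (⟨v, hvW⟩ : ↥W) ∈ P j := hj ▸ Submodule.mem_top
    exact hv2 this
  obtain ⟨w, hw⟩ := (Set.ne_univ_iff_exists_notMem _).mp hne
  simp only [Set.mem_iUnion, not_exists] at hw
  refine ⟨(w : n → F), ?_, fun j => ?_⟩
  · have h2 : (w : n → F) ∈ LinearMap.ker A.vecMulLinear := w.2
    rw [LinearMap.mem_ker, Matrix.vecMulLinear_apply] at h2
    exact h2
  · exact fun hz => hw j (by simpa [hP, dotLeftLin] using hz)

lemma dot_sum_elim {p q : Type*} [Fintype p] [Fintype q] (a : p ⊕ q → F) (c : p → F) :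
    a ⬝ᵥ Sum.elim c 0 = (a ∘ Sum.inl) ⬝ᵥ c := by
  simp [dotProduct, Fintype.sum_sum_type]

lemma aux_main {mf : Type*} [Fintype m] [Fintype mf] [Infinite F]
    (Gd : Matrix n m F) (Gf : Matrix n mf F) (s : mf → Bool) :
    (∃ v : n → F, v ᵥ* Gd = 0 ∧ (∀ j, s j = false → v ⬝ᵥ (fun r => Gf r j) = 0) ∧
       (∀ j, s j = true → v ⬝ᵥ (fun r => Gf r j) ≠ 0)) ↔
    (∀ j, s j = true →
      (fromCols (fromCols Gd (of fun r (k : {k // s k = false}) => Gf r k.1))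
          (replicateCol (Fin 1) (fun r => Gf r j))).rank
        > (fromCols Gd (of fun r (k : {k // s k = false}) => Gf r k.1)).rank) := by
  classical
  set A : Matrix n (m ⊕ {k // s k = false}) F :=
    fromCols Gd (of fun r (k : {k // s k = false}) => Gf r k.1) with hA
  have key : ∀ v : n → F, v ᵥ* A = 0 ↔
      (v ᵥ* Gd = 0 ∧ ∀ j, s j = false → v ⬝ᵥ (fun r => Gf r j) = 0) := by
    intro v
    rw [hA, vecMul_fromCols]
    constructor
    · intro h
      refine ⟨funext fun j => congrFun h (Sum.inl j), fun j hj => ?_⟩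
      have := congrFun h (Sum.inr ⟨j, hj⟩)
      simpa [vecMul, dotProduct] using this
    · rintro ⟨h1, h2⟩
      funext x
      rcases x with j | k
      · exact congrFun h1 j
      · simpa [vecMul, dotProduct] using h2 k.1 k.2
  constructor
  · rintro ⟨v, h1, h2, h3⟩ j hj
    rw [aux_rank_iff]
    intro hmem
    exact h3 j hj (aux_dot_zero_of_mem_span ((key v).mpr ⟨h1, h2⟩) hmem)
  · intro h
    have hex : ∀ k : {j // s j = true}, ∃ v : n → F,
        v ᵥ* A = 0 ∧ v ⬝ᵥ (fun r => Gf r k.1) ≠ 0 := fun k =>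
      aux_exists_of_not_mem_span (aux_rank_iff.mp (h k.1 k.2))
    obtain ⟨v, hv1, hv2⟩ := aux_avoid A (fun (k : {j // s j = true}) r => Gf r k.1) hex
    obtain ⟨hd, hf⟩ := (key v).mp hv1
    exact ⟨v, hd, hf, fun j hj => hv2 ⟨j, hj⟩⟩

/-- Theorem 3: the exact fault detection and isolation problem with structure matrix `S`
is solvable by rational filters if and only if the system is `S` fault isolable. -/
theorem efdip_solvable_iff_S_fault_isolable
    (p m_u m_d m_f n_b : ℕ)
    (G_u : Matrix (Fin p) (Fin m_u) (RatFunc ℝ))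
    (G_d : Matrix (Fin p) (Fin m_d) (RatFunc ℝ))
    (G_f : Matrix (Fin p) (Fin m_f) (RatFunc ℝ))
    (S : Fin n_b → Fin m_f → Bool) :
    (∃ q : Fin n_b → ((Fin p ⊕ Fin m_u) → RatFunc ℝ),
        ∀ i : Fin n_b,
          (q i) ᵥ* (Matrix.fromBlocks G_u G_d 1 0) = 0 ∧
          (∀ j : Fin m_f, S i j = false →
            (q i) ⬝ᵥ (Sum.elim (fun r => G_f r j) 0) = 0) ∧
          (∀ j : Fin m_f, S i j = true →
            (q i) ⬝ᵥ (Sum.elim (fun r => G_f r j) 0) ≠ 0)) ↔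
    (∀ i : Fin n_b, ∀ j : Fin m_f, S i j = true →
        (Matrix.fromCols
            (Matrix.fromCols G_d
              (Matrix.of fun r (k : {k : Fin m_f // S i k = false}) => G_f r k.1))
            (Matrix.replicateCol (Fin 1) (fun r => G_f r j))).rank
          > (Matrix.fromCols G_d
              (Matrix.of fun r (k : {k : Fin m_f // S i k = false}) => G_f r k.1)).rank) := by
  classical
  haveI : Infinite (RatFunc ℝ) :=
    Infinite.of_injective _ (algebraMap ℝ (RatFunc ℝ)).injective
  constructor
  · rintro ⟨q, hq⟩ i
    obtain ⟨h1, h2, h3⟩ := hq i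
    rw [← aux_main G_d G_f (S i)]
    refine ⟨q i ∘ Sum.inl, ?_, fun j hj => ?_, fun j hj => ?_⟩
    · have := congrFun h1
      funext j
      have h := this (Sum.inr j)
      rw [vecMul_fromBlocks] at h
      simpa using h
    · rw [← dot_sum_elim (q i) (fun r => G_f r j)]
      exact h2 j hj
    · rw [← dot_sum_elim (q i) (fun r => G_f r j)]
      exact h3 j hj
  · intro h
    have hv : ∀ i, ∃ v : Fin p → RatFunc ℝ, v ᵥ* G_d = 0 ∧
        (∀ j, S i j = false → v ⬝ᵥ (fun r => G_f r j) = 0) ∧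
        (∀ j, S i j = true → v ⬝ᵥ (fun r => G_f r j) ≠ 0) := fun i =>
      (aux_main G_d G_f (S i)).mpr (h i)
    choose v hv1 hv2 hv3 using hv
    refine ⟨fun i => Sum.elim (v i) (-(v i ᵥ* G_u)), fun i => ⟨?_, fun j hj => ?_, fun j hj => ?_⟩⟩
    · rw [vecMul_fromBlocks]
      funext x
      rcases x with j | j
      · simp [Sum.elim_comp_inl, Sum.elim_comp_inr]
      · simpa [Sum.elim_comp_inl, Sum.elim_comp_inr] using congrFun (hv1 i) j
    · rw [dot_sum_elim]
      simpa [Sum.elim_comp_inl] using hv2 i j hj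
    · rw [dot_sum_elim]
      simpa [Sum.elim_comp_inl] using hv3 i j hj
end

section
/- There exists a matrix Q : Matrix (Fin m_f) (Fin p ⊕ Fin m_u) K with Q * G = 0 and such that the matrix R_f := Q * (the (Fin p ⊕ Fin m_u) × Fin m_f matrix whose top block is G_f and bottom block is 0) satisfies R_f i j ≠ 0 if and only if i = j (i.e., R_f is diagonal with all diagonal entries nonzero), if and only if rank of the matrix [G_d G_f] (G_d augmented with the columns of G_f) equals rank G_d + m_f. (Theorem 4: the exact fault detection and isolation problem with structure matrix S = I_{m_f} is solvable by rational filters if and only if the system is strongly isolable.) -/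
open Matrix

section Aux

variable {K : Type*} [Field K] {p m_d m_f : ℕ}

/-- The column space of `[A B]` is the join of the column spaces of `A` and `B`. -/
lemma range_fromColumns_mulVecLin (A : Matrix (Fin p) (Fin m_d) K)
    (B : Matrix (Fin p) (Fin m_f) K) :
    LinearMap.range (Matrix.fromCols A B).mulVecLin
      = LinearMap.range A.mulVecLin ⊔ LinearMap.range B.mulVecLin := by
  apply le_antisymm
  · rintro y ⟨x, rfl⟩
    have hx : x = Sum.elim (fun i => x (Sum.inl i)) (fun i => x (Sum.inr i)) := by
      funext i; cases i <;> rfl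
    rw [Matrix.mulVecLin_apply, hx, Matrix.fromCols_mulVec_sumElim]
    exact Submodule.add_mem_sup ⟨_, rfl⟩ ⟨_, rfl⟩
  · apply sup_le
    · rintro y ⟨v, rfl⟩
      refine ⟨Sum.elim v 0, ?_⟩
      simp [Matrix.mulVecLin_apply, Matrix.fromCols_mulVec_sumElim]
    · rintro y ⟨v, rfl⟩
      refine ⟨Sum.elim 0 v, ?_⟩
      simp [Matrix.mulVecLin_apply, Matrix.fromCols_mulVec_sumElim]

lemma toMatrix'_mulVecLin' (A : Matrix (Fin p) (Fin m_d) K) :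
    LinearMap.toMatrix' A.mulVecLin = A := by
  have : A.mulVecLin = Matrix.toLin' A := rfl
  rw [this, LinearMap.toMatrix'_toLin']

end Aux

/-- Theorem 4: the exact fault detection and isolation problem with structure matrix
`S = I_{m_f}` is solvable by rational filters if and only if the system is strongly
isolable, i.e. `rank [G_d G_f] = rank G_d + m_f`. -/
theorem efdip_diagonal_solvable_iff_strongly_isolable
    (p m_u m_d m_f : ℕ)
    (G_u : Matrix (Fin p) (Fin m_u) (RatFunc ℝ))
    (G_d : Matrix (Fin p) (Fin m_d) (RatFunc ℝ))
    (G_f : Matrix (Fin p) (Fin m_f) (RatFunc ℝ)) :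
    (∃ Q : Matrix (Fin m_f) (Fin p ⊕ Fin m_u) (RatFunc ℝ),
        Q * (Matrix.fromBlocks G_u G_d 1 0)
            = (0 : Matrix (Fin m_f) (Fin m_u ⊕ Fin m_d) (RatFunc ℝ)) ∧
        (∀ i j : Fin m_f,
          (Q * (Matrix.fromRows G_f (0 : Matrix (Fin m_u) (Fin m_f) (RatFunc ℝ)))) i j ≠ 0
            ↔ i = j)) ↔
    (Matrix.fromCols G_d G_f).rank = G_d.rank + m_f := by
  set Vd := LinearMap.range G_d.mulVecLin with hVd
  set Vf := LinearMap.range G_f.mulVecLin with hVf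
  have hranks : (Matrix.fromCols G_d G_f).rank = Module.finrank (RatFunc ℝ) (Vd ⊔ Vf : Submodule (RatFunc ℝ) _) := by
    rw [Matrix.rank, range_fromColumns_mulVecLin]
  have hrankd : G_d.rank = Module.finrank (RatFunc ℝ) Vd := rfl
  have hsum := Submodule.finrank_sup_add_finrank_inf_eq Vd Vf
  have hfinVf : Module.finrank (RatFunc ℝ) Vf + Module.finrank (RatFunc ℝ) (LinearMap.ker G_f.mulVecLin)
      = m_f := by
    have := LinearMap.finrank_range_add_finrank_ker G_f.mulVecLin
    rwa [Module.finrank_fin_fun] at this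
  constructor
  · rintro ⟨Q, hQG, hdiag⟩
    set Q1 := Q.toCols₁ with hQ1
    set Q2 := Q.toCols₂ with hQ2
    have hQsplit : Q = Matrix.fromCols Q1 Q2 := (Matrix.fromCols_toCols Q).symm
    replace hQG : Q * (Matrix.fromBlocks G_u G_d (1 : Matrix (Fin m_u) (Fin m_u) (RatFunc ℝ)) 0) = (0 : Matrix (Fin m_f) (Fin m_u ⊕ Fin m_d) (RatFunc ℝ)) := hQG
    rw [hQsplit, Matrix.fromCols_mul_fromBlocks] at hQG
    have hQGd : Q1 * G_d = 0 := by
      have h0 : (0 : Matrix (Fin m_f) (Fin m_u ⊕ Fin m_d) (RatFunc ℝ))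
          = Matrix.fromCols 0 0 := Matrix.fromCols_zero.symm
      rw [h0, Matrix.fromCols_ext_iff] at hQG
      have := hQG.2
      rwa [Matrix.mul_zero, add_zero] at this
    set D := Q1 * G_f with hD
    have hR : Q * Matrix.fromRows G_f (0 : Matrix (Fin m_u) (Fin m_f) (RatFunc ℝ)) = D := by
      rw [hQsplit, Matrix.fromCols_mul_fromRows, Matrix.mul_zero, add_zero]
    rw [hR] at hdiag
    have hDdiag : ∀ i j : Fin m_f, i ≠ j → D i j = 0 := by
      intro i j hij
      by_contra h
      exact hij ((hdiag i j).mp h)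
    have hDne : ∀ i : Fin m_f, D i i ≠ 0 := fun i => (hdiag i i).mpr rfl
    -- D *ᵥ v is componentwise multiplication
    have hDmul : ∀ v : Fin m_f → RatFunc ℝ, ∀ i, (D *ᵥ v) i = D i i * v i := by
      intro v i
      simp only [Matrix.mulVec, dotProduct]
      rw [Finset.sum_eq_single i]
      · intro j _ hji
        rw [hDdiag i j (Ne.symm hji), zero_mul]
      · intro h; exact absurd (Finset.mem_univ i) h
    have hDinj : ∀ v : Fin m_f → RatFunc ℝ, D *ᵥ v = 0 → v = 0 := by
      intro v hv
      funext i
      have := congrFun hv i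
      rw [hDmul v i] at this
      exact (mul_eq_zero.mp this).resolve_left (hDne i)
    -- G_f has full column rank
    have hkerf : LinearMap.ker G_f.mulVecLin = ⊥ := by
      rw [Matrix.ker_mulVecLin_eq_bot_iff]
      intro v hv
      apply hDinj
      rw [hD, ← Matrix.mulVec_mulVec, hv, Matrix.mulVec_zero]
    have hfVf : Module.finrank (RatFunc ℝ) Vf = m_f := by
      rw [hkerf, finrank_bot, add_zero] at hfinVf
      exact hfinVf
    -- the column spaces intersect trivially
    have hdisj : Vd ⊓ Vf = ⊥ := by
      rw [eq_bot_iff]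
      rintro y ⟨⟨u, hu⟩, ⟨x, hx⟩⟩
      have hxy : G_f *ᵥ x = y := hx
      have huy : G_d *ᵥ u = y := hu
      have h1 : Q1 *ᵥ y = 0 := by
        rw [← huy, Matrix.mulVec_mulVec, hQGd, Matrix.zero_mulVec]
      have h2 : D *ᵥ x = 0 := by
        rw [hD, ← Matrix.mulVec_mulVec, hxy, h1]
      have hx0 : x = 0 := hDinj x h2
      have : y = 0 := by rw [← hxy, hx0, Matrix.mulVec_zero]
      simp [this]
    rw [hranks, hrankd]
    rw [hdisj, finrank_bot, add_zero, hfVf] at hsum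
    exact hsum
  · intro h
    rw [hranks, hrankd] at h
    have hVfle : Module.finrank (RatFunc ℝ) Vf ≤ m_f := by
      have := Matrix.rank_le_card_width G_f
      rwa [Fintype.card_fin] at this
    have hinf0 : Module.finrank (RatFunc ℝ) (Vd ⊓ Vf : Submodule (RatFunc ℝ) _) = 0 ∧
        Module.finrank (RatFunc ℝ) Vf = m_f := by
      rw [h] at hsum
      omega
    have hdisj : Vd ⊓ Vf = ⊥ := Submodule.finrank_eq_zero.mp hinf0.1
    have hkerf : LinearMap.ker G_f.mulVecLin = ⊥ := by
      have : Module.finrank (RatFunc ℝ) (LinearMap.ker G_f.mulVecLin) = 0 := by omega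
      exact Submodule.finrank_eq_zero.mp this
    -- build the left annihilator map
    set φ : (Fin m_f → RatFunc ℝ) →ₗ[RatFunc ℝ] ((Fin p → RatFunc ℝ) ⧸ Vd) := Vd.mkQ ∘ₗ G_f.mulVecLin with hφ
    have hφker : LinearMap.ker φ = ⊥ := by
      rw [eq_bot_iff]
      intro x hx
      have hx' : G_f.mulVecLin x ∈ Vd := by
        have : Vd.mkQ (G_f.mulVecLin x) = 0 := hx
        rwa [Submodule.mkQ_apply, Submodule.Quotient.mk_eq_zero] at this
      have hmem : G_f.mulVecLin x ∈ Vd ⊓ Vf := ⟨hx', ⟨x, rfl⟩⟩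
      rw [hdisj] at hmem
      have : G_f.mulVecLin x = 0 := hmem
      have hx0 : x ∈ LinearMap.ker G_f.mulVecLin := this
      rw [hkerf] at hx0
      simpa using hx0
    obtain ⟨g, hg⟩ := φ.exists_leftInverse_of_injective hφker
    set L : (Fin p → RatFunc ℝ) →ₗ[RatFunc ℝ] (Fin m_f → RatFunc ℝ) := g ∘ₗ Vd.mkQ with hL
    set Q1 : Matrix (Fin m_f) (Fin p) (RatFunc ℝ) := LinearMap.toMatrix' L with hQ1def
    have hQ1Gd : Q1 * G_d = 0 := by
      rw [hQ1def, ← toMatrix'_mulVecLin' G_d, ← LinearMap.toMatrix'_comp]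
      have : L ∘ₗ G_d.mulVecLin = 0 := by
        apply LinearMap.ext
        intro v
        have hmem : G_d.mulVecLin v ∈ Vd := ⟨v, rfl⟩
        simp only [hL, LinearMap.comp_apply, LinearMap.zero_apply, Submodule.mkQ_apply]
        rw [(Submodule.Quotient.mk_eq_zero Vd).mpr hmem, map_zero]
      rw [this, map_zero]
    have hQ1Gf : Q1 * G_f = 1 := by
      rw [hQ1def, ← toMatrix'_mulVecLin' G_f, ← LinearMap.toMatrix'_comp]
      have : L ∘ₗ G_f.mulVecLin = LinearMap.id := by
        rw [hL, LinearMap.comp_assoc, ← hφ, hg]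
      rw [this, LinearMap.toMatrix'_id]
    refine ⟨Matrix.fromCols Q1 (-(Q1 * G_u)), ?_, ?_⟩
    · show Matrix.fromCols Q1 (-(Q1 * G_u)) * Matrix.fromBlocks G_u G_d (1 : Matrix (Fin m_u) (Fin m_u) (RatFunc ℝ)) 0 = (0 : Matrix (Fin m_f) (Fin m_u ⊕ Fin m_d) (RatFunc ℝ))
      rw [Matrix.fromCols_mul_fromBlocks, hQ1Gd]
      simp [Matrix.fromCols_zero]
    · intro i j
      rw [Matrix.fromCols_mul_fromRows, Matrix.mul_zero, add_zero, hQ1Gf]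
      rcases eq_or_ne i j with rfl | hij
      · simp [Matrix.one_apply_eq]
      · simp [Matrix.one_apply_ne hij, hij]
end

section
/- Let K be a field, G_d : Matrix (Fin p) (Fin m_d) K, G_f : Matrix (Fin p) (Fin m_f) K, and M_r : Matrix (Fin q) (Fin m_f) K with rank M_r = m_f (full column rank). Then the rank of [G_f G_d] (horizontal concatenation) equals the rank of the block matrix with top block row [G_f G_d] and bottom block row [M_r 0], if and only if rank [G_f G_d] = rank G_d + m_f. (The solvability condition of the exact model-matching problem reduces to strong isolability when the reference model has full column rank.) -/
open Matrix

private lemma ker_eq_bot_of_rank_eq {K : Type*} [Field K] {q m : ℕ}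
    (C : Matrix (Fin q) (Fin m) K) (hC : C.rank = m) :
    LinearMap.ker C.mulVecLin = ⊥ := by
  have h := LinearMap.finrank_range_add_finrank_ker C.mulVecLin
  rw [Module.finrank_fintype_fun_eq_card, Fintype.card_fin] at h
  have hr : Module.finrank K (LinearMap.range C.mulVecLin) = m := hC
  rw [hr] at h
  have : Module.finrank K (LinearMap.ker C.mulVecLin) = 0 := by omega
  exact Submodule.finrank_eq_zero.mp this

private lemma rank_fromBlocks_of_full_col_rank {K : Type*} [Field K] {p q m₁ m₂ : ℕ}
    (A : Matrix (Fin p) (Fin m₁) K) (B : Matrix (Fin p) (Fin m₂) K)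
    (C : Matrix (Fin q) (Fin m₁) K) (hC : C.rank = m₁) :
    (Matrix.fromBlocks A B C (0 : Matrix (Fin q) (Fin m₂) K)).rank = B.rank + m₁ := by
  have hker := ker_eq_bot_of_rank_eq C hC
  set T := (Matrix.fromBlocks A B C (0 : Matrix (Fin q) (Fin m₂) K)).mulVecLin with hT
  -- membership characterization
  have hmem : ∀ v : (Fin m₁ ⊕ Fin m₂) → K, v ∈ LinearMap.ker T →
      (v ∘ Sum.inl = 0 ∧ B.mulVec (v ∘ Sum.inr) = 0) := by
    intro v hv
    have hv' : (Matrix.fromBlocks A B C 0).mulVec v = 0 := hv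
    rw [Matrix.fromBlocks_mulVec] at hv'
    have h2 : C.mulVec (v ∘ Sum.inl) + (0 : Matrix (Fin q) (Fin m₂) K).mulVec (v ∘ Sum.inr) = 0 := by
      funext i; exact congrFun hv' (Sum.inr i)
    rw [Matrix.zero_mulVec, add_zero] at h2
    have hinl : v ∘ Sum.inl = 0 := by
      have : (v ∘ Sum.inl) ∈ LinearMap.ker C.mulVecLin := h2
      rwa [hker, Submodule.mem_bot] at this
    have h1 : A.mulVec (v ∘ Sum.inl) + B.mulVec (v ∘ Sum.inr) = 0 := by
      funext i; exact congrFun hv' (Sum.inl i)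
    rw [hinl, Matrix.mulVec_zero, zero_add] at h1
    exact ⟨hinl, h1⟩
  -- equivalence of kernels
  have e : LinearMap.ker B.mulVecLin ≃ₗ[K] LinearMap.ker T := by
    refine
      { toFun := fun y => ⟨Sum.elim 0 y.1, ?_⟩
        map_add' := ?_
        map_smul' := ?_
        invFun := fun v => ⟨v.1 ∘ Sum.inr, (hmem v.1 v.2).2⟩
        left_inv := ?_
        right_inv := ?_ }
    · show (Matrix.fromBlocks A B C 0).mulVec (Sum.elim 0 y.1) = 0
      rw [Matrix.fromBlocks_mulVec]
      have h1 : (Sum.elim (0 : Fin m₁ → K) y.1) ∘ Sum.inl = 0 := rfl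
      have h2 : (Sum.elim (0 : Fin m₁ → K) y.1) ∘ Sum.inr = y.1 := rfl
      rw [h1, h2, Matrix.mulVec_zero, Matrix.zero_mulVec, zero_add, add_zero]
      have hy : B.mulVec y.1 = 0 := y.2
      rw [hy]
      funext i; cases i <;> simp [Matrix.mulVec_zero]
    · intro y z
      apply Subtype.ext
      funext i; cases i <;> simp
    · intro c y
      apply Subtype.ext
      funext i; cases i <;> simp
    · intro y
      apply Subtype.ext
      rfl
    · intro v
      apply Subtype.ext
      funext i
      cases i with
      | inl i => exact (congrFun (hmem v.1 v.2).1 i).symm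
      | inr i => rfl
  -- rank-nullity for T and B
  have hTrn := LinearMap.finrank_range_add_finrank_ker T
  have hBrn := LinearMap.finrank_range_add_finrank_ker B.mulVecLin
  rw [Module.finrank_fintype_fun_eq_card, Fintype.card_sum, Fintype.card_fin,
    Fintype.card_fin] at hTrn
  rw [Module.finrank_fintype_fun_eq_card, Fintype.card_fin] at hBrn
  have hke : Module.finrank K (LinearMap.ker T) = Module.finrank K (LinearMap.ker B.mulVecLin) :=
    e.symm.finrank_eq
  show Module.finrank K (LinearMap.range T) = Module.finrank K (LinearMap.range B.mulVecLin) + m₁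
  omega

/-- When the reference model `M_r` has full column rank, the solvability condition of the
exact model-matching problem reduces to strong isolability. -/
theorem emmp_rank_condition_iff_strong_isolability
    (K : Type*) [Field K] (p m_d m_f q : ℕ)
    (G_d : Matrix (Fin p) (Fin m_d) K)
    (G_f : Matrix (Fin p) (Fin m_f) K)
    (M_r : Matrix (Fin q) (Fin m_f) K)
    (hMr : M_r.rank = m_f) :
    ((Matrix.fromCols G_f G_d).rank
        = (Matrix.fromBlocks G_f G_d M_r (0 : Matrix (Fin q) (Fin m_d) K)).rank) ↔
    (Matrix.fromCols G_f G_d).rank = G_d.rank + m_f := by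
  rw [rank_fromBlocks_of_full_col_rank G_f G_d M_r hMr]
end

section
/- Let r_d := rank G_d and let N : Matrix (Fin (p - r_d)) (Fin p ⊕ Fin m_u) K satisfy N * G = 0 and rank N = p - r_d (a basis of the left nullspace of G). Then for every j : Fin m_f: the vector N *ᵥ (Sum.elim (fun i => G_f i j) 0) is nonzero if and only if the rank of the matrix obtained by appending the column (fun i => G_f i j) to G_d is strictly greater than rank G_d. (Corollary: the exact fault detection problem is solvable if and only if every column of the fault transfer matrix of the nullspace-reduced system is nonzero.) -/
open Matrix

set_option maxHeartbeats 1000000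
set_option synthInstance.maxHeartbeats 200000

/-- Corollary: given a left nullspace basis `N` of `G`, the exact fault detection problem
is solvable if and only if every column of the fault transfer matrix of the
nullspace-reduced system is nonzero. -/
theorem reduced_fault_column_nonzero_iff_rank_increase
    (p m_u m_d m_f : ℕ)
    (G_u : Matrix (Fin p) (Fin m_u) (RatFunc ℝ))
    (G_d : Matrix (Fin p) (Fin m_d) (RatFunc ℝ))
    (G_f : Matrix (Fin p) (Fin m_f) (RatFunc ℝ))
    (N : Matrix (Fin (p - G_d.rank)) (Fin p ⊕ Fin m_u) (RatFunc ℝ))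
    (hN : N * (Matrix.fromBlocks G_u G_d 1 0)
        = (0 : Matrix (Fin (p - G_d.rank)) (Fin m_u ⊕ Fin m_d) (RatFunc ℝ)))
    (hrank : N.rank = p - G_d.rank) :
    ∀ j : Fin m_f,
      (N *ᵥ (Sum.elim (fun i => G_f i j) 0) ≠ 0) ↔
      (Matrix.fromCols G_d (Matrix.replicateCol (Fin 1) (fun i => G_f i j))).rank
        > G_d.rank := by
  intro j
  set f : Fin p → RatFunc ℝ := fun i => G_f i j with hf
  set N₁ : Matrix (Fin (p - G_d.rank)) (Fin p) (RatFunc ℝ) := N.submatrix id Sum.inl with hN₁def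
  set N₂ : Matrix (Fin (p - G_d.rank)) (Fin m_u) (RatFunc ℝ) := N.submatrix id Sum.inr with hN₂def
  have hrp : G_d.rank ≤ p := by
    simpa using G_d.rank_le_card_height
  -- N₁ * G_d = 0
  have hN1Gd : N₁ * G_d = 0 := by
    ext i d
    have := congrFun (congrFun hN i) (Sum.inr d)
    change (N * Matrix.fromBlocks G_u G_d (1 : Matrix (Fin m_u) (Fin m_u) (RatFunc ℝ)) 0) i (Sum.inr d) = 0 at this
    simpa [Matrix.mul_apply, Fintype.sum_sum_type, N₁] using this
  -- N₂ = -(N₁ * G_u)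
  have hN2 : N₂ = -(N₁ * G_u) := by
    ext i u
    have := congrFun (congrFun hN i) (Sum.inl u)
    change (N * Matrix.fromBlocks G_u G_d (1 : Matrix (Fin m_u) (Fin m_u) (RatFunc ℝ)) 0) i (Sum.inl u) = 0 at this
    simp only [Matrix.mul_apply, Fintype.sum_sum_type, Matrix.fromBlocks_apply₁₁,
      Matrix.fromBlocks_apply₂₁, Matrix.zero_apply, Matrix.one_apply, mul_ite, mul_one,
      mul_zero, Finset.sum_ite_eq', Finset.mem_univ, if_true, Matrix.zero_apply] at this
    simp only [Matrix.neg_apply, Matrix.mul_apply, N₁, N₂, Matrix.submatrix_apply, id]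
    exact eq_neg_of_add_eq_zero_left (by rw [add_comm]; exact this)
  -- N = N₁ * (fromColumns 1 (-G_u))
  have hNfac : N = N₁ * Matrix.fromCols 1 (-G_u) := by
    rw [Matrix.mul_fromCols, Matrix.mul_one]
    ext i (k | k)
    · simp [Matrix.fromCols, N₁]
    · have := congrFun (congrFun hN2 i) k
      simp [Matrix.fromCols, N₂] at this ⊢
      simpa using this
  have hrkN1 : N₁.rank = p - G_d.rank := by
    refine le_antisymm (by simpa using N₁.rank_le_card_height) ?_
    calc p - G_d.rank = N.rank := hrank.symm
    _ ≤ N₁.rank := by rw [hNfac]; exact Matrix.rank_mul_le_left _ _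
  -- kernel of N₁ has dimension rank G_d
  have hker : Module.finrank (RatFunc ℝ) (LinearMap.ker N₁.mulVecLin) = G_d.rank := by
    have h := LinearMap.finrank_range_add_finrank_ker N₁.mulVecLin
    rw [Module.finrank_pi] at h
    have h2 : Module.finrank (RatFunc ℝ) (LinearMap.range N₁.mulVecLin) = p - G_d.rank := hrkN1
    simp only [Fintype.card_fin] at h
    omega
  set W := LinearMap.range G_d.mulVecLin with hW
  have hWrank : Module.finrank (RatFunc ℝ) W = G_d.rank := rfl
  have hle : W ≤ LinearMap.ker N₁.mulVecLin := by
    rintro x ⟨y, rfl⟩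
    simp only [LinearMap.mem_ker, Matrix.mulVecLin_apply, Matrix.mulVec_mulVec, hN1Gd,
      Matrix.zero_mulVec]
  have hWeq : W = LinearMap.ker N₁.mulVecLin :=
    Submodule.eq_of_le_of_finrank_le hle (by rw [hWrank, hker])
  have hmem : f ∈ W ↔ N₁ *ᵥ f = 0 := by
    rw [hWeq]; exact LinearMap.mem_ker
  -- LHS vector equals N₁ *ᵥ f
  have hvec : N *ᵥ (Sum.elim f 0) = N₁ *ᵥ f := by
    ext i
    simp [Matrix.mulVec, dotProduct, Fintype.sum_sum_type, N₁]
  -- the range of the augmented matrix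
  set C : Matrix (Fin p) (Fin 1) (RatFunc ℝ) := Matrix.replicateCol (Fin 1) f with hC
  have hCrange : LinearMap.range C.mulVecLin = Submodule.span (RatFunc ℝ) {f} := by
    apply le_antisymm
    · rintro _ ⟨x, rfl⟩
      have hsm : C.mulVecLin x = x 0 • f := by
        ext i; simp [C, Matrix.mulVec, dotProduct, mul_comm]
      rw [hsm]
      exact Submodule.smul_mem _ _ (Submodule.mem_span_singleton_self f)
    · rw [Submodule.span_singleton_le_iff_mem]
      exact ⟨fun _ => 1, by ext i; simp [C, Matrix.mulVec, dotProduct]⟩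
  have hsplit : LinearMap.range (Matrix.fromCols G_d C).mulVecLin
      = W ⊔ Submodule.span (RatFunc ℝ) {f} := by
    rw [← hCrange]
    apply le_antisymm
    · rintro _ ⟨x, rfl⟩
      have hx : x = Sum.elim (x ∘ Sum.inl) (x ∘ Sum.inr) := by ext (k | k) <;> rfl
      rw [Matrix.mulVecLin_apply, hx, Matrix.fromCols_mulVec_sumElim]
      exact Submodule.add_mem_sup ⟨_, rfl⟩ ⟨_, rfl⟩
    · rw [sup_le_iff]
      constructor
      · rintro _ ⟨x, rfl⟩
        exact ⟨Sum.elim x 0, by simp [Matrix.fromCols_mulVec_sumElim]⟩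
      · rintro _ ⟨x, rfl⟩
        exact ⟨Sum.elim 0 x, by simp [Matrix.fromCols_mulVec_sumElim]⟩
  have hrkC : (Matrix.fromCols G_d C).rank
      = Module.finrank (RatFunc ℝ) (W ⊔ Submodule.span (RatFunc ℝ) {f} : Submodule _ _) := by
    rw [Matrix.rank, hsplit]
  rw [hvec, hrkC]
  simp only [ne_eq, ← hmem]
  constructor
  · intro hfW
    have hlt : W < W ⊔ Submodule.span (RatFunc ℝ) {f} := by
      refine lt_of_le_of_ne le_sup_left ?_
      intro h
      exact hfW (h ▸ (le_sup_right : _ ≤ W ⊔ Submodule.span (RatFunc ℝ) {f}) (Submodule.mem_span_singleton_self f))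
    have := Submodule.finrank_lt_finrank_of_lt hlt
    rwa [hWrank] at this
  · intro hgt hfW
    have heq : W ⊔ Submodule.span (RatFunc ℝ) {f} = W := by
      rw [sup_eq_left, Submodule.span_singleton_le_iff_mem]; exact hfW
    rw [heq, hWrank] at hgt
    exact lt_irrefl _ hgt
end

section
/- Let r_d := rank G_d and let N : Matrix (Fin (p - r_d)) (Fin p ⊕ Fin m_u) K satisfy N * G = 0 and rank N = p - r_d (a basis of the left nullspace of G). Then rank (N * Ḡ_f) = m_f, where Ḡ_f is the (Fin p ⊕ Fin m_u) × Fin m_f matrix whose top block is G_f and bottom block is 0, if and only if rank [G_d G_f] = rank G_d + m_f. (Corollary: strong isolability holds if and only if the fault transfer matrix of the nullspace-reduced system has full column rank m_f, i.e., is left invertible.) -/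
open Matrix

/-- Key rank identity: if `N₁` is a full-rank left annihilator of `A`, then
`rank [A B] = rank A + rank (N₁ B)`. -/
lemma rank_fromColumns_eq_rank_add_rank_nullspace_mul
    {K : Type*} [Field K] {q pp nd nf : Type*}
    [Fintype q] [Fintype pp] [Fintype nd] [Fintype nf]
    (A : Matrix pp nd K) (B : Matrix pp nf K) (N₁ : Matrix q pp K)
    (h0 : N₁ * A = 0) (hr : N₁.rank + A.rank = Fintype.card pp) :
    (Matrix.fromCols A B).rank = A.rank + (N₁ * B).rank := by
  classical
  set L := N₁.mulVecLin with hL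
  set CA := LinearMap.range A.mulVecLin with hCA
  set CB := LinearMap.range B.mulVecLin with hCB
  -- the kernel of L is exactly the column space of A
  have hker : CA = LinearMap.ker L := by
    have hle : CA ≤ LinearMap.ker L := by
      rintro _ ⟨x, rfl⟩
      simp only [LinearMap.mem_ker, hL]
      have : N₁.mulVecLin (A.mulVecLin x) = (N₁ * A).mulVecLin x := by
        rw [Matrix.mulVecLin_mul]; rfl
      rw [this, h0]
      simp
    have hdim : Module.finrank K (LinearMap.ker L) ≤ Module.finrank K CA := by
      have h1 := LinearMap.finrank_range_add_finrank_ker L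
      have h2 : Module.finrank K (pp → K) = Fintype.card pp := Module.finrank_pi K
      have h3 : Module.finrank K (LinearMap.range L) = N₁.rank := rfl
      have h4 : Module.finrank K CA = A.rank := rfl
      omega
    exact (Submodule.eq_of_le_of_finrank_le hle hdim)
  -- the column space of [A B] is CA ⊔ CB
  have hsup : LinearMap.range (Matrix.fromCols A B).mulVecLin = CA ⊔ CB := by
    apply le_antisymm
    · rintro _ ⟨x, rfl⟩
      have hx : x = Sum.elim (x ∘ Sum.inl) (x ∘ Sum.inr) := by
        funext j; cases j <;> rfl
      have : (Matrix.fromCols A B).mulVecLin x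
          = A *ᵥ (x ∘ Sum.inl) + B *ᵥ (x ∘ Sum.inr) := by
        rw [Matrix.mulVecLin_apply]
        conv_lhs => rw [hx]
        rw [Matrix.fromCols_mulVec_sumElim]
      rw [this]
      exact Submodule.add_mem_sup ⟨_, rfl⟩ ⟨_, rfl⟩
    · apply sup_le
      · rintro _ ⟨x, rfl⟩
        refine ⟨Sum.elim x 0, ?_⟩
        simp [Matrix.mulVecLin_apply]
      · rintro _ ⟨x, rfl⟩
        refine ⟨Sum.elim 0 x, ?_⟩
        simp [Matrix.mulVecLin_apply]
  -- the column space of N₁ * B is the image of CB under L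
  have hmap : LinearMap.range (N₁ * B).mulVecLin = CB.map L := by
    rw [Matrix.mulVecLin_mul, LinearMap.range_comp]
  -- rank-nullity for L restricted to CB
  have hres := LinearMap.finrank_range_add_finrank_ker (L.domRestrict CB)
  rw [LinearMap.range_domRestrict, LinearMap.ker_domRestrict] at hres
  have hkerres : Module.finrank K ((LinearMap.ker L).comap CB.subtype)
      = Module.finrank K (CB ⊓ LinearMap.ker L : Submodule K (pp → K)) := by
    rw [← Submodule.finrank_map_subtype_eq CB ((LinearMap.ker L).comap CB.subtype),
      Submodule.map_comap_subtype]
  have hgrass := Submodule.finrank_sup_add_finrank_inf_eq CA CB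
  have hfr : Module.finrank K CB = Module.finrank K (CB : Submodule K (pp → K)) := rfl
  have hinf : (CB ⊓ LinearMap.ker L : Submodule K (pp → K)) = CA ⊓ CB := by
    rw [← hker, inf_comm]
  rw [hkerres, hinf] at hres
  show Module.finrank K (LinearMap.range (Matrix.fromCols A B).mulVecLin)
      = A.rank + Module.finrank K (LinearMap.range (N₁ * B).mulVecLin)
  rw [hsup, hmap]
  have h4 : Module.finrank K CA = A.rank := rfl
  omega

/-- Corollary: strong isolability holds if and only if the fault transfer matrix of the
nullspace-reduced system has full column rank `m_f` (left invertibility). -/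
theorem reduced_fault_matrix_full_rank_iff_strong_isolability
    (p m_u m_d m_f : ℕ)
    (G_u : Matrix (Fin p) (Fin m_u) (RatFunc ℝ))
    (G_d : Matrix (Fin p) (Fin m_d) (RatFunc ℝ))
    (G_f : Matrix (Fin p) (Fin m_f) (RatFunc ℝ))
    (N : Matrix (Fin (p - G_d.rank)) (Fin p ⊕ Fin m_u) (RatFunc ℝ))
    (hN : N * (Matrix.fromBlocks G_u G_d 1 0)
        = (0 : Matrix (Fin (p - G_d.rank)) (Fin m_u ⊕ Fin m_d) (RatFunc ℝ)))
    (hrank : N.rank = p - G_d.rank) :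
    (N * (Matrix.fromRows G_f (0 : Matrix (Fin m_u) (Fin m_f) (RatFunc ℝ)))).rank = m_f ↔
    (Matrix.fromCols G_d G_f).rank = G_d.rank + m_f := by
  classical
  set N₁ := N.toCols₁ with hN₁
  set N₂ := N.toCols₂ with hN₂
  have hNsplit : Matrix.fromCols N₁ N₂ = N := Matrix.fromCols_toCols N
  -- extract the two block equations from hN
  have hN' : @HMul.hMul _ _ (Matrix (Fin (p - G_d.rank)) (Fin m_u ⊕ Fin m_d) (RatFunc ℝ))
      Matrix.instHMulOfFintypeOfMulOfAddCommMonoid N (Matrix.fromBlocks G_u G_d 1 0) = 0 := hN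
  rw [← hNsplit, Matrix.fromCols_mul_fromBlocks, Matrix.mul_one, Matrix.mul_zero,
    add_zero] at hN'
  have h1 : N₁ * G_u + N₂ = 0 := by
    have := congrArg Matrix.toCols₁ hN'
    simp [Matrix.toCols₁_fromCols, Matrix.toCols₁] at this
    ext i j
    simpa using congrFun (congrFun this i) j
  have h2 : N₁ * G_d = 0 := by
    have := congrArg Matrix.toCols₂ hN'
    simp [Matrix.toCols₂_fromCols, Matrix.toCols₂] at this
    ext i j
    simpa using congrFun (congrFun this i) j
  clear hN'
  -- rank N₁ = rank N
  have hrk_le : N₁.rank ≤ N.rank := by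
    have : N * Matrix.fromRows (1 : Matrix (Fin p) (Fin p) (RatFunc ℝ)) (0 : Matrix (Fin m_u) (Fin p) (RatFunc ℝ))
        = N₁ := by
      rw [← hNsplit, Matrix.fromCols_mul_fromRows]
      simp
    rw [← this]
    exact Matrix.rank_mul_le_left _ _
  have hrk_ge : N.rank ≤ N₁.rank := by
    have hN2 : N₂ = -(N₁ * G_u) := by
      exact eq_neg_of_add_eq_zero_right h1
    have : N₁ * Matrix.fromCols (1 : Matrix (Fin p) (Fin p) (RatFunc ℝ)) (-G_u) = N := by
      rw [Matrix.mul_fromCols, Matrix.mul_one, Matrix.mul_neg, ← hN2, hNsplit]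
    rw [← this]
    exact Matrix.rank_mul_le_left _ _
  have hrkN₁ : N₁.rank = p - G_d.rank := by omega
  -- N * fromRows G_f 0 = N₁ * G_f
  have hred : N * Matrix.fromRows G_f (0 : Matrix (Fin m_u) (Fin m_f) (RatFunc ℝ)) = N₁ * G_f := by
    rw [← hNsplit, Matrix.fromCols_mul_fromRows]
    simp
  have hle : G_d.rank ≤ p := by
    have := G_d.rank_le_card_height
    simpa using this
  have hr : N₁.rank + G_d.rank = Fintype.card (Fin p) := by
    rw [hrkN₁, Fintype.card_fin]
    omega
  have hkey := rank_fromColumns_eq_rank_add_rank_nullspace_mul G_d G_f N₁ h2 hr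
  rw [hred]
  omega
end
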